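/- Fix ε, δ ∈ (0,1) and L Pauli observables with max_ℓ w(o_ℓ) ≤ w. If M ≥ 3^w · 2 log(2L/δ) / ν with ν = 1 − exp(−ε²/2), then M i.i.d. uniformly random Pauli measurements satisfy E_P[Conf_ε(O;P)] ≤ δ/2. In particular, since ν ≥ ε²/2 · (1 − ε²/4) ≥ ε²/4 for ε ∈ (0,1), a measurement budget M = O(3^w log(L/δ)/ε²) suffices. -/

import Mathlib

inductive Pauli | I | X | Y | Z
deriving DecidableEq

instance instFintypePauli : Fintype Pauli :=
  ⟨{Pauli.I, Pauli.X, Pauli.Y, Pauli.Z}, by intro x; cases x <;> decide⟩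

inductive Axis | X | Y | Z
deriving DecidableEq

instance instFintypeAxis : Fintype Axis :=
  ⟨{Axis.X, Axis.Y, Axis.Z}, by intro x; cases x <;> decide⟩

def Axis.toPauli : Axis → Pauli
  | .X => .X
  | .Y => .Y
  | .Z => .Z

/-- single-qubit hitting relation: `o = I` or `o = p`. -/
def hit1 (o : Pauli) (p : Axis) : Prop := o = Pauli.I ∨ o = p.toPauli

instance (o : Pauli) (p : Axis) : Decidable (hit1 o p) := by unfold hit1; infer_instance

/-- `o ▷ p`: every coordinate of `o` is `I` or matches `p`. -/
def hits {n : ℕ} (o : Fin n → Pauli) (p : Fin n → Axis) : Prop := ∀ k, hit1 (o k) (p k)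

instance {n : ℕ} (o : Fin n → Pauli) (p : Fin n → Axis) : Decidable (hits o p) := by
  unfold hits; infer_instance

/-- weight: number of non-identity coordinates. -/
def weight {n : ℕ} (o : Fin n → Pauli) : ℕ :=
  (Finset.univ.filter (fun k => o k ≠ Pauli.I)).card

/-- hitting count of `o` among the measurements `P`. -/
def hitCount {n M : ℕ} (o : Fin n → Pauli) (P : Fin M → Fin n → Axis) : ℕ :=
  (Finset.univ.filter (fun m => hits o (P m))).card

/-- the confidence bound. -/
noncomputable def Conf {n M L : ℕ} (ε : ℝ) (O : Fin L → Fin n → Pauli)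
    (P : Fin M → Fin n → Axis) : ℝ :=
  ∑ ℓ, Real.exp (-(ε ^ 2 / 2) * (hitCount (O ℓ) P))

open Finset

lemma card_hit1 (o : Pauli) :
    ((Finset.univ : Finset Axis).filter (fun a => hit1 o a)).card
      = if o = Pauli.I then 3 else 1 := by
  cases o <;> decide

lemma filter_hits_eq (n : ℕ) (o : Fin n → Pauli) :
    (Finset.univ : Finset (Fin n → Axis)).filter (fun p => hits o p)
      = Fintype.piFinset (fun k => Finset.univ.filter (fun a => hit1 (o k) a)) := by
  ext p
  simp only [Finset.mem_filter, Finset.mem_univ, true_and, Fintype.mem_piFinset]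
  rfl

lemma card_hits (n : ℕ) (o : Fin n → Pauli) :
    ((Finset.univ : Finset (Fin n → Axis)).filter (fun p => hits o p)).card
      = 3 ^ (n - weight o) := by
  rw [filter_hits_eq, Fintype.card_piFinset]
  have h1 : ∀ k, ((Finset.univ : Finset Axis).filter (fun a => hit1 (o k) a)).card
      = if o k = Pauli.I then 3 else 1 := fun k => card_hit1 (o k)
  calc ∏ k, ((Finset.univ : Finset Axis).filter (fun a => hit1 (o k) a)).card
      = ∏ k, (if o k = Pauli.I then 3 else 1) := by
        exact Finset.prod_congr rfl (fun k _ => h1 k)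
    _ = 3 ^ (Finset.univ.filter (fun k => o k = Pauli.I)).card := by
        rw [← Finset.prod_filter_mul_prod_filter_not Finset.univ (fun k => o k = Pauli.I)]
        rw [Finset.prod_congr rfl (fun k hk => if_pos (Finset.mem_filter.mp hk).2),
            Finset.prod_congr rfl (fun k hk => if_neg (Finset.mem_filter.mp hk).2)]
        simp
    _ = 3 ^ (n - weight o) := by
        congr 1
        have := Finset.card_filter_add_card_filter_not
          (s := (Finset.univ : Finset (Fin n))) (p := fun k => o k = Pauli.I)
        simp only [Finset.card_univ, Fintype.card_fin] at this
        unfold weight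
        simp only [ne_eq]
        omega

/-- measurement budget `M ≥ 3^w · 2 log(2L/δ)/ν` makes the expected
confidence bound at most `δ/2`. -/
theorem stmt8 {n : ℕ} (M L w : ℕ) (hL : 0 < L) (O : Fin L → Fin n → Pauli)
    (hw : ∀ ℓ, weight (O ℓ) ≤ w)
    (ε δ : ℝ) (hε : ε ∈ Set.Ioo (0 : ℝ) 1) (hδ : δ ∈ Set.Ioo (0 : ℝ) 1)
    (hM : (3 : ℝ) ^ w * (2 * Real.log (2 * L / δ)) / (1 - Real.exp (-(ε ^ 2 / 2)))
            ≤ (M : ℝ)) :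
    (∑ P : Fin M → Fin n → Axis, Conf ε O P)
        / (Fintype.card (Fin M → Fin n → Axis) : ℝ) ≤ δ / 2 := by
  set E := Real.exp (-(ε ^ 2 / 2)) with hE
  set ν := 1 - E with hν
  have hc : (0:ℝ) < ε ^ 2 / 2 := div_pos (pow_pos hε.1 2) two_pos
  have hE1 : E < 1 := by
    rw [hE, Real.exp_lt_one_iff]; linarith
  have hE0 : 0 < E := Real.exp_pos _
  have hν0 : 0 < ν := by rw [hν]; linarith
  have hν1 : ν < 1 := by rw [hν]; linarith
  -- per-observable sum
  have key : ∀ ℓ : Fin L, ∑ P : Fin M → Fin n → Axis,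
      Real.exp (-(ε ^ 2 / 2) * (hitCount (O ℓ) P))
      = ((3:ℝ) ^ n - 3 ^ (n - weight (O ℓ)) * ν) ^ M := by
    intro ℓ
    have hsum : ∑ p : Fin n → Axis, (if hits (O ℓ) p then E else 1)
        = (3:ℝ) ^ n - 3 ^ (n - weight (O ℓ)) * ν := by
      rw [Finset.sum_ite, Finset.sum_const, Finset.sum_const]
      rw [card_hits]
      have hcard : (Finset.univ.filter (fun p : Fin n → Axis => ¬ hits (O ℓ) p)).card
          = 3 ^ n - 3 ^ (n - weight (O ℓ)) := by
        have := Finset.card_filter_add_card_filter_not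
          (s := (Finset.univ : Finset (Fin n → Axis))) (p := fun p => hits (O ℓ) p)
        rw [card_hits] at this
        have hcu : (Finset.univ : Finset (Fin n → Axis)).card = 3 ^ n := by
          simp [Fintype.card_fun, show Fintype.card Axis = 3 from rfl]
        omega
      rw [hcard]
      have hle : 3 ^ (n - weight (O ℓ)) ≤ 3 ^ n := Nat.pow_le_pow_right (by norm_num) (Nat.sub_le _ _)
      rw [nsmul_eq_mul, nsmul_eq_mul, Nat.cast_sub hle]
      push_cast
      ring
    rw [← hsum, Fintype.sum_pow]
    apply Finset.sum_congr rfl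
    intro P _
    have hHC : (hitCount (O ℓ) P : ℝ) = ∑ m : Fin M, (if hits (O ℓ) (P m) then (1:ℝ) else 0) := by
      unfold hitCount
      rw [Finset.card_filter]
      push_cast
      rfl
    rw [hHC, Finset.mul_sum, Real.exp_sum]
    apply Finset.prod_congr rfl
    intro m _
    by_cases h : hits (O ℓ) (P m) <;> simp [h, hE]
  -- rewrite LHS
  have hcard3 : (Fintype.card (Fin M → Fin n → Axis) : ℝ) = ((3:ℝ) ^ n) ^ M := by
    simp only [Fintype.card_fun, Fintype.card_fin, show Fintype.card Axis = 3 from rfl]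
    push_cast
    ring
  unfold Conf
  rw [Finset.sum_comm]
  rw [Finset.sum_div]
  have hterm : ∀ ℓ : Fin L,
      (∑ P : Fin M → Fin n → Axis, Real.exp (-(ε ^ 2 / 2) * (hitCount (O ℓ) P)))
        / (Fintype.card (Fin M → Fin n → Axis) : ℝ)
      ≤ Real.exp (-(M * ν / 3 ^ w)) := by
    intro ℓ
    rw [key ℓ, hcard3, ← div_pow]
    have h3n : (0:ℝ) < (3:ℝ) ^ n := by positivity
    have hwn : weight (O ℓ) ≤ n := by
      unfold weight
      calc _ ≤ (Finset.univ : Finset (Fin n)).card := Finset.card_filter_le _ _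
        _ = n := by simp
    have hsplit : (3:ℝ) ^ (n - weight (O ℓ)) * 3 ^ (weight (O ℓ)) = 3 ^ n := by
      rw [← pow_add]; congr 1; omega
    have hdiv : ((3:ℝ) ^ n - 3 ^ (n - weight (O ℓ)) * ν) / 3 ^ n
        = 1 - ν / 3 ^ (weight (O ℓ)) := by
      field_simp
      nlinarith [hsplit]
    rw [hdiv]
    have hq1 : ν / 3 ^ (weight (O ℓ)) ≤ 1 := by
      apply div_le_one_of_le₀ (by nlinarith [one_le_pow₀ (show (1:ℝ) ≤ 3 by norm_num) (n := weight (O ℓ))]) (by positivity)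
    have hmono : (1 : ℝ) - ν / 3 ^ (weight (O ℓ)) ≤ Real.exp (-(ν / 3 ^ w)) := by
      have h1 : ν / 3 ^ w ≤ ν / 3 ^ (weight (O ℓ)) := by
        apply div_le_div_of_nonneg_left (le_of_lt hν0) (by positivity)
        exact pow_le_pow_right₀ (by norm_num) (hw ℓ)
      calc (1:ℝ) - ν / 3 ^ (weight (O ℓ)) ≤ 1 - ν / 3 ^ w := by linarith
        _ ≤ Real.exp (-(ν / 3 ^ w)) := by
            have := Real.add_one_le_exp (-(ν / 3 ^ w)); linarith
    calc (1 - ν / 3 ^ (weight (O ℓ))) ^ M ≤ (Real.exp (-(ν / 3 ^ w))) ^ M := by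
          apply pow_le_pow_left₀ (by linarith) hmono _
      _ = Real.exp (-(M * ν / 3 ^ w)) := by
          rw [← Real.exp_nat_mul]; congr 1; ring
  calc ∑ ℓ : Fin L, (∑ P : Fin M → Fin n → Axis,
        Real.exp (-(ε ^ 2 / 2) * (hitCount (O ℓ) P)))
          / (Fintype.card (Fin M → Fin n → Axis) : ℝ)
      ≤ ∑ ℓ : Fin L, Real.exp (-(M * ν / 3 ^ w)) :=
        Finset.sum_le_sum (fun ℓ _ => hterm ℓ)
    _ = L * Real.exp (-(M * ν / 3 ^ w)) := by simp [Finset.sum_const, mul_comm]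
    _ ≤ δ / 2 := by
        have hL0 : (0:ℝ) < L := by exact_mod_cast hL
        have hL1 : (1:ℝ) ≤ L := by exact_mod_cast hL
        have hratio : (1:ℝ) ≤ 2 * L / δ := by
          rw [le_div_iff₀ hδ.1]
          nlinarith [hδ.2]
        have hlog : 0 ≤ Real.log (2 * L / δ) := Real.log_nonneg hratio
        have hMν : Real.log (2 * L / δ) ≤ M * ν / 3 ^ w := by
          rw [div_le_iff₀ hν0] at hM
          rw [le_div_iff₀ (show (0:ℝ) < 3^w by positivity)]
          nlinarith
        have : Real.exp (-(M * ν / 3 ^ w)) ≤ Real.exp (-(Real.log (2 * L / δ))) :=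
          Real.exp_le_exp.mpr (by linarith)
        have hexp : Real.exp (-(Real.log (2 * L / δ))) = δ / (2 * L) := by
          rw [Real.exp_neg, Real.exp_log (by linarith)]
          rw [inv_div]
        calc (L:ℝ) * Real.exp (-(M * ν / 3 ^ w)) ≤ L * (δ / (2 * L)) := by
              rw [← hexp]; exact mul_le_mul_of_nonneg_left this (le_of_lt hL0)
          _ = δ / 2 := by field_simp
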